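/- Coprimality of Vandermonde power quotients: Let g, h be positive integers with gcd(g, h) = 1. If P, Q ∈ ℂ[x_0, x_1, x_2, x_3] satisfy V·P = ∏_{0 ≤ p < q ≤ 3} (x_q^g − x_p^g) and V·Q = ∏_{0 ≤ p < q ≤ 3} (x_q^h − x_p^h), then P and Q are relatively prime, i.e. every common divisor of P and Q in ℂ[x_0, x_1, x_2, x_3] is a unit. -/

import Mathlib

open MvPolynomial

/-- The Vandermonde polynomial `V = ∏_{0 ≤ p < q ≤ 3} (x_q − x_p)` in `ℂ[x_0,x_1,x_2,x_3]`. -/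
noncomputable def Vand : MvPolynomial (Fin 4) ℂ :=
  ∏ p : Fin 4, ∏ q : Fin 4, if p < q then (X q - X p) else 1

/-- The product `∏_{0 ≤ p < q ≤ 3} (x_q^m − x_p^m)`. -/
noncomputable def vandPow (m : ℕ) : MvPolynomial (Fin 4) ℂ :=
  ∏ p : Fin 4, ∏ q : Fin 4, if p < q then (X q ^ m - X p ^ m) else 1

lemma prime_X4 (q : Fin 4) : Prime (X q : MvPolynomial (Fin 4) ℂ) := by
  have h0 : Prime (X 0 : MvPolynomial (Fin 4) ℂ) := by
    rw [← MulEquiv.prime_iff (MvPolynomial.finSuccEquiv ℂ 3).toMulEquiv]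
    simpa [MvPolynomial.finSuccEquiv_X_zero] using
      (Polynomial.prime_X : Prime (Polynomial.X : Polynomial (MvPolynomial (Fin 3) ℂ)))
  rw [← MulEquiv.prime_iff (MvPolynomial.renameEquiv ℂ (Equiv.swap (0 : Fin 4) q)).toMulEquiv] at h0
  simpa [Equiv.swap_apply_left] using h0

lemma prime_lf (c : ℂ) {p q : Fin 4} (hpq : p ≠ q) :
    Prime (X q - C c * X p : MvPolynomial (Fin 4) ℂ) := by
  classical
  set f : Fin 4 → MvPolynomial (Fin 4) ℂ :=
    fun i => if i = q then X q - C c * X p else X i with hf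
  set g : Fin 4 → MvPolynomial (Fin 4) ℂ :=
    fun i => if i = q then X q + C c * X p else X i with hg
  have hfg : (aeval f).comp (aeval g) = AlgHom.id ℂ (MvPolynomial (Fin 4) ℂ) := by
    apply MvPolynomial.algHom_ext
    intro i
    by_cases hi : i = q
    · subst hi
      simp [hf, hg, hpq, Ne.symm hpq]
    · simp [hf, hg, hi]
  have hgf : (aeval g).comp (aeval f) = AlgHom.id ℂ (MvPolynomial (Fin 4) ℂ) := by
    apply MvPolynomial.algHom_ext
    intro i
    by_cases hi : i = q
    · subst hi
      simp [hf, hg, hpq, Ne.symm hpq]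
    · simp [hf, hg, hi]
  set e : MvPolynomial (Fin 4) ℂ ≃ₐ[ℂ] MvPolynomial (Fin 4) ℂ :=
    AlgEquiv.ofAlgHom (aeval f) (aeval g) hfg hgf with he
  have hX := prime_X4 q
  rw [← MulEquiv.prime_iff e.toMulEquiv] at hX
  have heq : e (X q) = X q - C c * X p := by
    show (aeval f) (X q) = _
    simp [hf]
  rwa [show (e.toMulEquiv (X q) : MvPolynomial (Fin 4) ℂ) = e (X q) from rfl, heq] at hX

lemma lf_dvd_lf {a b : ℂ} (ha : a ≠ 0) {p q p' q' : Fin 4} (hpq : p < q) (hpq' : p' < q')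
    (hdvd : (X q - C a * X p : MvPolynomial (Fin 4) ℂ) ∣ (X q' - C b * X p')) :
    p = p' ∧ q = q' ∧ a = b := by
  classical
  obtain ⟨w, hw⟩ := hdvd
  have key : ∀ v : Fin 4 → ℂ, v q = a * v p → v q' = b * v p' := by
    intro v hv
    have h := congrArg (eval v) hw
    simp only [map_sub, map_mul, eval_X, eval_C] at h
    rw [hv, sub_self, zero_mul] at h
    linear_combination h
  have hne : p ≠ q := ne_of_lt hpq
  have hne' : p' ≠ q' := ne_of_lt hpq'
  by_cases hq' : q' = q
  · by_cases hp' : p' = p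
    · refine ⟨hp'.symm, hq'.symm, ?_⟩
      have := key (fun i => if i = q then a else 1) (by simp [hne])
      simpa [hq', hp', hne] using this
    · exfalso
      have hp'q : p' ≠ q := hq' ▸ hne'
      have := key (fun i => if i = q then a else if i = p then 1 else 0)
        (by simp [hne])
      simp [hq', hp', hp'q, hne] at this
      exact ha this
  · by_cases hq'p : q' = p
    · have h1 : p' ≠ p := ne_of_lt (hq'p ▸ hpq')
      have h2 : p' ≠ q := ne_of_lt (lt_trans (hq'p ▸ hpq') hpq)
      have := key (fun i => if i = q then a else if i = p then 1 else 0)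
        (by simp [hne])
      simp [hq', hq'p, h1, h2, hne] at this
    · have := key (fun i => if i = q' then 1 else 0)
        (by simp [Ne.symm hq', Ne.symm hq'p])
      simp [hne'] at this

noncomputable def lfProd (m : ℕ) : MvPolynomial (Fin 4) ℂ :=
  ∏ p : Fin 4, ∏ q : Fin 4,
    if p < q then (∏ ζ ∈ (Polynomial.nthRootsFinset m (1 : ℂ)).erase 1, (X q - C ζ * X p)) else 1

lemma pow_sub_pow_eq (m : ℕ) (hm : 0 < m) (p q : Fin 4) :
    (X q ^ m - X p ^ m : MvPolynomial (Fin 4) ℂ) =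
      ∏ ζ ∈ Polynomial.nthRootsFinset m (1 : ℂ), (X q - C ζ * X p) := by
  apply MvPolynomial.funext
  intro x
  rw [map_sub, map_pow, map_pow, map_prod]
  simp only [eval_X, map_sub, map_mul, eval_C]
  exact (Complex.isPrimitiveRoot_exp m hm.ne').pow_sub_pow_eq_prod_sub_mul (x q) (x p) hm

lemma vandPow_eq (m : ℕ) (hm : 0 < m) : vandPow m = Vand * lfProd m := by
  rw [Vand, vandPow, lfProd, ← Finset.prod_mul_distrib]
  refine Finset.prod_congr rfl fun p _ => ?_
  rw [← Finset.prod_mul_distrib]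
  refine Finset.prod_congr rfl fun q _ => ?_
  split_ifs with hlt
  · rw [pow_sub_pow_eq m hm p q,
      ← Finset.mul_prod_erase _ _ (Polynomial.one_mem_nthRootsFinset hm)]
    simp
  · simp

lemma lfProd_ne_zero (m : ℕ) : lfProd m ≠ 0 := by
  rw [lfProd]
  apply Finset.prod_ne_zero_iff.mpr
  intro p _
  apply Finset.prod_ne_zero_iff.mpr
  intro q _
  split_ifs with hlt
  · exact Finset.prod_ne_zero_iff.mpr fun ζ _ => (prime_lf ζ (ne_of_lt hlt)).ne_zero
  · exact one_ne_zero

lemma Vand_ne_zero : Vand ≠ 0 := by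
  rw [Vand]
  apply Finset.prod_ne_zero_iff.mpr
  intro p _
  apply Finset.prod_ne_zero_iff.mpr
  intro q _
  split_ifs with hlt
  · have := (prime_lf 1 (ne_of_lt hlt)).ne_zero
    simpa using this
  · exact one_ne_zero

lemma exists_lf_factor {m : ℕ} (hm : 0 < m) {e : MvPolynomial (Fin 4) ℂ} (he : Prime e)
    (hdvd : e ∣ lfProd m) :
    ∃ p q ζ, p < q ∧ ζ ∈ (Polynomial.nthRootsFinset m (1 : ℂ)).erase 1 ∧
      e ∣ (X q - C ζ * X p) := by
  rw [lfProd] at hdvd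
  obtain ⟨p, -, hdvd⟩ := he.exists_mem_finset_dvd hdvd
  obtain ⟨q, -, hdvd⟩ := he.exists_mem_finset_dvd hdvd
  by_cases hlt : p < q
  · rw [if_pos hlt] at hdvd
    obtain ⟨ζ, hζ, hdvd⟩ := he.exists_mem_finset_dvd hdvd
    exact ⟨p, q, ζ, hlt, hζ, hdvd⟩
  · rw [if_neg hlt] at hdvd
    exact absurd (isUnit_of_dvd_one hdvd) he.not_unit

/-- Coprimality of Vandermonde power quotients. Let `g, h` be positive
integers with `gcd(g,h) = 1`.  If `V·P = ∏_{p<q}(x_q^g − x_p^g)` and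
`V·Q = ∏_{p<q}(x_q^h − x_p^h)`, then `P` and `Q` are relatively prime. -/
theorem vandermonde_power_quotients_coprime
    (g h : ℕ) (hg : 0 < g) (hh : 0 < h) (hgh : Nat.gcd g h = 1)
    (P Q : MvPolynomial (Fin 4) ℂ)
    (hP : Vand * P = vandPow g)
    (hQ : Vand * Q = vandPow h) :
    IsRelPrime P Q := by
  have hPg : P = lfProd g := mul_left_cancel₀ Vand_ne_zero (hP.trans (vandPow_eq g hg))
  have hQh : Q = lfProd h := mul_left_cancel₀ Vand_ne_zero (hQ.trans (vandPow_eq h hh))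
  intro d hdP hdQ
  by_contra hud
  have hd0 : d ≠ 0 := by
    rintro rfl
    rw [zero_dvd_iff] at hdP
    exact lfProd_ne_zero g (hPg ▸ hdP)
  obtain ⟨e, he_irr, he_dvd⟩ := WfDvdMonoid.exists_irreducible_factor hud hd0
  have he_prime : Prime e := (UniqueFactorizationMonoid.irreducible_iff_prime).mp he_irr
  obtain ⟨p, q, ζ, hpq, hζ, heL1⟩ :=
    exists_lf_factor hg he_prime (he_dvd.trans (hPg ▸ hdP))
  obtain ⟨p', q', ξ, hpq', hξ, heL2⟩ :=
    exists_lf_factor hh he_prime (he_dvd.trans (hQh ▸ hdQ))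
  -- `e` is associated to `X q - C ζ * X p`
  obtain ⟨w, hw⟩ := heL1
  have hL1irr : Irreducible (X q - C ζ * X p : MvPolynomial (Fin 4) ℂ) :=
    (prime_lf ζ (ne_of_lt hpq)).irreducible
  have hwu : IsUnit w := by
    rcases hL1irr.isUnit_or_isUnit hw with h1 | h1
    · exact absurd h1 he_prime.not_unit
    · exact h1
  have hL1dvd : (X q - C ζ * X p : MvPolynomial (Fin 4) ℂ) ∣ (X q' - C ξ * X p') := by
    obtain ⟨u, rfl⟩ := hwu
    have : Associated e (X q - C ζ * X p : MvPolynomial (Fin 4) ℂ) := ⟨u, hw.symm⟩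
    exact this.symm.dvd.trans heL2
  have hζ1 : ζ ≠ 1 := (Finset.mem_erase.mp hζ).1
  have hζg : ζ ^ g = 1 :=
    (Polynomial.mem_nthRootsFinset hg (1 : ℂ)).mp (Finset.mem_erase.mp hζ).2
  have hξh : ξ ^ h = 1 :=
    (Polynomial.mem_nthRootsFinset hh (1 : ℂ)).mp (Finset.mem_erase.mp hξ).2
  have hζ0 : ζ ≠ 0 := by
    rintro rfl
    rw [zero_pow hg.ne'] at hζg
    exact zero_ne_one hζg
  obtain ⟨hpp, hqq, hζξ⟩ := lf_dvd_lf hζ0 hpq hpq' hL1dvd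
  have : ζ ^ Nat.gcd g h = 1 := pow_gcd_eq_one.mpr ⟨hζg, hζξ ▸ hξh⟩
  rw [hgh, pow_one] at this
  exact hζ1 this
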